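/- Let L < R be integers and let τ > 0 and 0 < αγ ≤ γ < β be reals with (β+γ)/(β−γ) < 4/3, and set ρ = min{ (1/4)·(β−γ)/(β+γ), 1 − (3/4)·(β+γ)/(β−γ) } (which is positive). Let p_L < p_{L+1} < ⋯ < p_R be reals with (β−αγ)τ ≤ p_{j+1} − p_j ≤ (β+αγ)τ for all L ≤ j ≤ R−1 (the block boundaries). Let l, r be reals with p_L ≤ l < p_{L+1}, p_{R−1} < r ≤ p_R, and r − l ≥ 18(β+γ)τ. Define m_1 = (1−ρ)l + ρr and m_2 = ρl + (1−ρ)r, and let M_1, M_2 be the integers with p_{M_1} ≤ m_1 < p_{M_1+1} and p_{M_2−1} < m_2 ≤ p_{M_2}. Then M_1 ≤ L + (R−L)/3 and M_2 ≥ L + 2(R−L)/3. -/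

import Mathlib

/-- **The middle subinterval avoids the outer thirds** (Lemma 26, item (1)).
Blocks `L, …, R−1` of a corrupted codeword occupy positions `[p_j, p_{j+1})`
with block sizes in `[(β−αγ)τ, (β+αγ)τ]`; the interval `[l, r)` has closure
consisting of blocks `L` through `R−1` and length at least `18(β+γ)τ`.
With `ρ = min{(1/4)(β−γ)/(β+γ), 1 − (3/4)(β+γ)/(β−γ)}`,
`m₁ = (1−ρ)l + ρr` and `m₂ = ρl + (1−ρ)r`, if `M₁` and `M₂` are the block
indices with `p_{M₁} ≤ m₁ < p_{M₁+1}` and `p_{M₂−1} < m₂ ≤ p_{M₂}`, then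
`M₁ ≤ L + (R−L)/3` and `M₂ ≥ L + 2(R−L)/3`. -/
theorem middle_subinterval_avoids_outer_thirds
    (L R : ℤ) (hLR : L < R)
    (τ α γ β : ℝ) (hτ : 0 < τ) (hαγ0 : 0 < α * γ) (hαγ : α * γ ≤ γ) (hγβ : γ < β)
    (hratio : (β + γ) / (β - γ) < 4 / 3)
    (ρ : ℝ)
    (hρ : ρ = min ((1 / 4) * ((β - γ) / (β + γ))) (1 - (3 / 4) * ((β + γ) / (β - γ))))
    (p : ℤ → ℝ)
    (hp : ∀ j : ℤ, L ≤ j → j ≤ R - 1 →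
      (β - α * γ) * τ ≤ p (j + 1) - p j ∧ p (j + 1) - p j ≤ (β + α * γ) * τ)
    (l r : ℝ) (hl1 : p L ≤ l) (hl2 : l < p (L + 1))
    (hr1 : p (R - 1) < r) (hr2 : r ≤ p R)
    (hlen : 18 * (β + γ) * τ ≤ r - l)
    (m₁ m₂ : ℝ) (hm₁ : m₁ = (1 - ρ) * l + ρ * r) (hm₂ : m₂ = ρ * l + (1 - ρ) * r)
    (M₁ M₂ : ℤ)
    (hM₁range : L ≤ M₁ ∧ M₁ ≤ R - 1) (hM₂range : L + 1 ≤ M₂ ∧ M₂ ≤ R)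
    (hM₁ : p M₁ ≤ m₁ ∧ m₁ < p (M₁ + 1))
    (hM₂ : p (M₂ - 1) < m₂ ∧ m₂ ≤ p M₂) :
    (M₁ : ℝ) ≤ (L : ℝ) + ((R : ℝ) - L) / 3 ∧
      (L : ℝ) + 2 * ((R : ℝ) - L) / 3 ≤ (M₂ : ℝ) := by
  obtain ⟨hM₁L, hM₁R⟩ := hM₁range
  obtain ⟨hM₂L, hM₂R⟩ := hM₂range
  have hγ0 : 0 < γ := lt_of_lt_of_le hαγ0 hαγ
  have hb : 0 < β - γ := by linarith
  have hB : 0 < β + γ := by linarith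
  have hBb : β + γ < 4 / 3 * (β - γ) := (div_lt_iff₀ hb).mp hratio
  have hρ1 : ρ ≤ 1 / 4 * ((β - γ) / (β + γ)) := hρ ▸ min_le_left _ _
  have hρ0 : 0 < ρ := by
    rw [hρ]
    apply lt_min
    · positivity
    · have : (β + γ) / (β - γ) < 4 / 3 := hratio
      nlinarith
  have tele : ∀ a : ℤ, L ≤ a → ∀ c : ℤ, a ≤ c → c ≤ R →
      ((c - a : ℤ) : ℝ) * ((β - γ) * τ) ≤ p c - p a ∧
      p c - p a ≤ ((c - a : ℤ) : ℝ) * ((β + γ) * τ) := by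
    intro a ha
    refine Int.le_induction ?_ ?_
    · intro _; simp
    · intro n hn ih hR
      obtain ⟨ih1, ih2⟩ := ih (by omega)
      obtain ⟨h1, h2⟩ := hp n (by omega) (by omega)
      have e : ((n + 1 - a : ℤ) : ℝ) = ((n - a : ℤ) : ℝ) + 1 := by push_cast; ring
      rw [e]
      constructor <;> nlinarith [mul_nonneg (sub_nonneg.mpr hαγ) hτ.le]
  have hteleLR := tele L le_rfl R (le_of_lt hLR) le_rfl
  have hrl : r - l ≤ ((R - L : ℤ) : ℝ) * ((β + γ) * τ) := by
    have := hteleLR.2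
    linarith
  have hrl0 : 0 < r - l := lt_of_lt_of_le (by positivity) hlen
  have hRL18 : (18 : ℝ) ≤ ((R - L : ℤ) : ℝ) := by
    have hBτ : 0 < (β + γ) * τ := by positivity
    have h : 18 * ((β + γ) * τ) ≤ ((R - L : ℤ) : ℝ) * ((β + γ) * τ) := by
      calc 18 * ((β + γ) * τ) = 18 * (β + γ) * τ := by ring
        _ ≤ r - l := hlen
        _ ≤ _ := hrl
    exact le_of_mul_le_mul_right h hBτ
  have hρrl : ρ * (r - l) ≤ 1 / 4 * (((R - L : ℤ) : ℝ) * ((β - γ) * τ)) := by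
    have h := mul_le_mul hρ1 hrl (le_of_lt hrl0) (by positivity)
    have e : 1 / 4 * ((β - γ) / (β + γ)) * (((R - L : ℤ) : ℝ) * ((β + γ) * τ))
        = 1 / 4 * (((R - L : ℤ) : ℝ) * ((β - γ) * τ)) := by
      field_simp
    rw [e] at h
    exact h
  have hbτ : 0 < (β - γ) * τ := by positivity
  have key : ∀ x : ℝ, x * ((β - γ) * τ) ≤ ρ * (r - l) + (β + γ) * τ →
      x ≤ ((R - L : ℤ) : ℝ) / 3 := by
    intro x hx
    have hA : 18 * ((β - γ) * τ) ≤ ((R - L : ℤ) : ℝ) * ((β - γ) * τ) :=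
      mul_le_mul_of_nonneg_right hRL18 hbτ.le
    have hC : (β + γ) * τ ≤ 3 / 2 * ((β - γ) * τ) := by
      have h := mul_le_mul_of_nonneg_right
        (show β + γ ≤ 3 / 2 * (β - γ) by linarith) hτ.le
      linarith
    have h2 : x * ((β - γ) * τ) ≤ ((R - L : ℤ) : ℝ) / 3 * ((β - γ) * τ) := by
      linarith
    exact le_of_mul_le_mul_right h2 hbτ
  have hαγτ : (β + α * γ) * τ ≤ (β + γ) * τ :=
    mul_le_mul_of_nonneg_right (by linarith) hτ.le
  constructor
  · -- M₁ bound
    have t1 := (tele L le_rfl M₁ hM₁L (by omega)).1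
    obtain ⟨hpL1, hpL2⟩ := hp L le_rfl (by omega)
    have hlp : l - p L ≤ (β + γ) * τ := by linarith only [hl2, hpL2, hαγτ]
    have hm1l : m₁ - l = ρ * (r - l) := by rw [hm₁]; ring
    have hx : ((M₁ - L : ℤ) : ℝ) * ((β - γ) * τ) ≤ ρ * (r - l) + (β + γ) * τ := by
      have h := hM₁.1
      linarith only [t1, h, hm1l, hlp]
    have hfin := key _ hx
    push_cast at hfin ⊢
    linarith only [hfin]
  · -- M₂ bound
    have t2 := (tele M₂ (by omega) R hM₂R le_rfl).1
    obtain ⟨hpR1, hpR2⟩ := hp (R - 1) (by omega) (by omega)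
    rw [show R - 1 + 1 = R by ring] at hpR1 hpR2
    have hrp : p R - r ≤ (β + γ) * τ := by linarith only [hr1, hpR2, hαγτ]
    have hm2r : r - m₂ = ρ * (r - l) := by rw [hm₂]; ring
    have hx : ((R - M₂ : ℤ) : ℝ) * ((β - γ) * τ) ≤ ρ * (r - l) + (β + γ) * τ := by
      have h := hM₂.2
      linarith only [t2, h, hm2r, hrp]
    have hfin := key _ hx
    push_cast at hfin ⊢
    linarith only [hfin]
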